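/- Let g be the bracket structure on basis {A,B,C,X,Y} with [A,B]=2C, [C,A]=2B, [B,C]=−2A (so span{A,B,C} ≅ sl(2,ℝ)), [A,X]=b₁₁B+c₁₁C, [A,Y]=b₂₁B+c₂₁C, [B,X]=b₁₁A−c₁₂C, [B,Y]=b₂₁A−c₂₂C, [C,X]=c₁₁A+c₁₂B, [C,Y]=c₂₁A+c₂₂B, [X,Y]=ρX+θ₁A+θ₂B+θ₃C. The Jacobi identity holds if and only if θ₁ = ½(−ρc₁₂ − c₂₁b₁₁ + c₁₁b₂₁), θ₂ = ½(−ρc₁₁ − c₂₂b₁₁ + c₁₂b₂₁), θ₃ = ½(ρb₁₁ − c₂₂c₁₁ + c₁₂c₂₁). -/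

import Mathlib

set_option maxHeartbeats 4000000


/-- Proposition, SL(2,ℝ) case: the bracket defined by the given
relations on the basis `{A,B,C,X,Y}` (with `span{A,B,C} ≅ sl(2,ℝ)`) satisfies
the Jacobi identity iff
`θ₁ = ½(−ρc₁₂ − c₂₁b₁₁ + c₁₁b₂₁)`, `θ₂ = ½(−ρc₁₁ − c₂₂b₁₁ + c₁₂b₂₁)`,
`θ₃ = ½(ρb₁₁ − c₂₂c₁₁ + c₁₂c₂₁)`. -/
theorem stmt_8 {V : Type*} [AddCommGroup V] [Module ℝ V]
    (br : V →ₗ[ℝ] V →ₗ[ℝ] V)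
    (A B C X Y : V)
    (b11 b21 c11 c12 c21 c22 ρ θ1 θ2 θ3 : ℝ)
    (hLI : LinearIndependent ℝ ![A, B, C, X, Y])
    (hspan : Submodule.span ℝ {A, B, C, X, Y} = ⊤)
    (hskew : ∀ u v : V, br u v = - br v u)
    (hAB : br A B = (2:ℝ) • C) (hCA : br C A = (2:ℝ) • B) (hBC : br B C = -((2:ℝ) • A))
    (hAX : br A X = b11 • B + c11 • C) (hAY : br A Y = b21 • B + c21 • C)
    (hBX : br B X = b11 • A - c12 • C) (hBY : br B Y = b21 • A - c22 • C)
    (hCX : br C X = c11 • A + c12 • B) (hCY : br C Y = c21 • A + c22 • B)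
    (hXY : br X Y = ρ • X + θ1 • A + θ2 • B + θ3 • C) :
    (∀ u v w : V, br (br u v) w + br (br v w) u + br (br w u) v = 0) ↔
      (θ1 = (1/2) * (-ρ * c12 - c21 * b11 + c11 * b21) ∧
       θ2 = (1/2) * (-ρ * c11 - c22 * b11 + c12 * b21) ∧
       θ3 = (1/2) * (ρ * b11 - c22 * c11 + c12 * c21)) := by
  have hself : ∀ u : V, br u u = 0 := by
    intro u
    have h : br u u + br u u = 0 := by nth_rewrite 1 [hskew u u]; abel
    have h2 : (2:ℝ) • br u u = 0 := by rw [two_smul]; exact h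
    have := smul_eq_zero.mp h2
    rcases this with h' | h'
    · norm_num at h'
    · exact h'
  have hBA : br B A = -((2:ℝ) • C) := by rw [hskew, hAB]
  have hAC : br A C = -((2:ℝ) • B) := by rw [hskew, hCA]
  have hCB : br C B = (2:ℝ) • A := by rw [hskew, hBC]; abel
  have hXA : br X A = -(b11 • B + c11 • C) := by rw [hskew, hAX]
  have hYA : br Y A = -(b21 • B + c21 • C) := by rw [hskew, hAY]
  have hXB : br X B = -(b11 • A - c12 • C) := by rw [hskew, hBX]
  have hYB : br Y B = -(b21 • A - c22 • C) := by rw [hskew, hBY]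
  have hXC : br X C = -(c11 • A + c12 • B) := by rw [hskew, hCX]
  have hYC : br Y C = -(c21 • A + c22 • B) := by rw [hskew, hCY]
  have hYX : br Y X = -(ρ • X + θ1 • A + θ2 • B + θ3 • C) := by rw [hskew, hXY]
  constructor
  · intro hJ
    have key := Fintype.linearIndependent_iff.mp hLI
    have h1 := hJ A X Y
    have h2 := hJ B X Y
    simp only [hAB, hBA, hCA, hAC, hBC, hCB, hAX, hXA, hAY, hYA, hBX, hXB, hBY, hYB,
      hCX, hXC, hCY, hYC, hXY, hYX, hself, map_add, map_sub, map_smul, map_neg,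
      LinearMap.add_apply, LinearMap.smul_apply, LinearMap.neg_apply, LinearMap.sub_apply,
      map_zero, LinearMap.zero_apply, smul_add, smul_sub, smul_neg, smul_smul,
      smul_zero, zero_smul, add_zero, zero_add, neg_zero] at h1 h2
    have e1 := key ![0, c11*c22 + 2*θ3 - ρ*b11 - c12*c21, -(b11*c22) - 2*θ2 - ρ*c11 + b21*c12, 0, 0]
      (by
        simp only [Fin.sum_univ_five, Matrix.cons_val_zero, Matrix.cons_val_one, Matrix.head_cons,
          Matrix.cons_val_two, Matrix.tail_cons, Matrix.cons_val_three, Matrix.cons_val_four]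
        linear_combination (norm := module) h1)
    have e2 := key ![c11*c22 + 2*θ3 - ρ*b11 - c12*c21, 0, b11*c21 + 2*θ1 + ρ*c12 - b21*c11, 0, 0]
      (by
        simp only [Fin.sum_univ_five, Matrix.cons_val_zero, Matrix.cons_val_one, Matrix.head_cons,
          Matrix.cons_val_two, Matrix.tail_cons, Matrix.cons_val_three, Matrix.cons_val_four]
        linear_combination (norm := module) h2)
    have q1 := e1 1
    have q2 := e1 2
    have q3 := e2 2
    simp only [Matrix.cons_val_one, Matrix.head_cons, Matrix.cons_val_two, Matrix.tail_cons, Matrix.cons_val_zero] at q1 q2 q3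
    refine ⟨by linarith, by linarith, by linarith⟩
  · rintro ⟨rfl, rfl, rfl⟩
    intro u v w
    let T : V →ₗ[ℝ] V →ₗ[ℝ] V →ₗ[ℝ] V :=
      { toFun := fun u => LinearMap.mk₂ ℝ
          (fun v w => br (br u v) w + br (br v w) u + br (br w u) v)
          (by intro v₁ v₂ w; simp only [map_add, LinearMap.add_apply]; try abel)
          (by intro c v w; simp only [map_smul, LinearMap.smul_apply, smul_add]; try abel)
          (by intro v w₁ w₂; simp only [map_add, LinearMap.add_apply]; try abel)
          (by intro c v w; simp only [map_smul, LinearMap.smul_apply, smul_add]; try abel)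
        map_add' := by
          intro u₁ u₂; ext v w
          simp only [LinearMap.mk₂_apply, LinearMap.add_apply, map_add]
          try abel
        map_smul' := by
          intro c u; ext v w
          simp only [LinearMap.mk₂_apply, LinearMap.smul_apply, map_smul, RingHom.id_apply, smul_add]
          try abel }
    have hT : T = 0 := by
      apply LinearMap.ext_on hspan; intro x hx
      apply LinearMap.ext_on hspan; intro y hy
      apply LinearMap.ext_on hspan; intro z hz
      simp only [Set.mem_insert_iff, Set.mem_singleton_iff] at hx hy hz
      rcases hx with rfl|rfl|rfl|rfl|rfl <;> rcases hy with rfl|rfl|rfl|rfl|rfl <;>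
        rcases hz with rfl|rfl|rfl|rfl|rfl <;>
      · show br (br _ _) _ + br (br _ _) _ + br (br _ _) _ = 0
        simp only [hAB, hBA, hCA, hAC, hBC, hCB, hAX, hXA, hAY, hYA, hBX, hXB, hBY, hYB,
          hCX, hXC, hCY, hYC, hXY, hYX, hself, map_add, map_sub, map_smul, map_neg,
          LinearMap.add_apply, LinearMap.smul_apply, LinearMap.neg_apply, LinearMap.sub_apply,
          map_zero, LinearMap.zero_apply, smul_add, smul_sub, smul_neg, smul_smul,
          smul_zero, zero_smul, add_zero, zero_add, neg_zero]
        try module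
    have h0 : T u v w = 0 := by rw [hT]; rfl
    exact h0
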